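/- arXiv:2603.07738 — 3 statements merged into one kernel-verified Lean document; each statement's English description precedes it below -/
import Mathlib

section
/- The LDCU density reconstruction creates no new local extrema: let a⁻ < 0 < a⁺ and v be real numbers with a⁻ < v < a⁺, let ρ⁻, ρ_int, ρ⁺ be real numbers, define S⁻ = (v − a⁻)(ρ_int − ρ⁻), S⁺ = (a⁺ − v)(ρ⁺ − ρ_int), δ = minmod(S⁻, S⁺), ρ_L = ρ_int + δ/(a⁻ − v) and ρ_R = ρ_int + δ/(a⁺ − v). Then min(ρ⁻, ρ_int) ≤ ρ_L ≤ max(ρ⁻, ρ_int) and min(ρ_int, ρ⁺) ≤ ρ_R ≤ max(ρ_int, ρ⁺). -/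
/-- The minmod function: `min` if both arguments are positive, `max` if both are
negative, and `0` otherwise. -/
noncomputable def minmod (a b : ℝ) : ℝ :=
  if 0 < a ∧ 0 < b then min a b else if a < 0 ∧ b < 0 then max a b else 0

/-- The LDCU density reconstruction creates no new local extrema. -/
theorem ldcu_density_reconstruction_no_new_extrema
    (am ap v ρm ρint ρp : ℝ)
    (ham : am < 0) (hap : 0 < ap) (hamv : am < v) (hvap : v < ap)
    (Sm Sp δ ρL ρR : ℝ)
    (hSm : Sm = (v - am) * (ρint - ρm))
    (hSp : Sp = (ap - v) * (ρp - ρint))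
    (hδ : δ = minmod Sm Sp)
    (hρL : ρL = ρint + δ / (am - v))
    (hρR : ρR = ρint + δ / (ap - v)) :
    (min ρm ρint ≤ ρL ∧ ρL ≤ max ρm ρint) ∧
      (min ρint ρp ≤ ρR ∧ ρR ≤ max ρint ρp) := by
  have hc1 : 0 < v - am := by linarith
  have hc2 : 0 < ap - v := by linarith
  have hne1 : am - v ≠ 0 := by linarith
  have hne2 : ap - v ≠ 0 := by linarith
  have hdL : δ = (am - v) * (δ / (am - v)) := (mul_div_cancel₀ δ hne1).symm
  have hdR : δ = (ap - v) * (δ / (ap - v)) := (mul_div_cancel₀ δ hne2).symm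
  subst hρL hρR hδ hSm hSp
  unfold minmod at *
  split_ifs at hdL hdR ⊢ with h1 h2
  · obtain ⟨ha, hb⟩ := h1
    have hρm : ρm < ρint := by nlinarith
    have hρp : ρint < ρp := by nlinarith
    have hmin1 : min ((v - am) * (ρint - ρm)) ((ap - v) * (ρp - ρint)) ≤
        (v - am) * (ρint - ρm) := min_le_left _ _
    have hmin2 : min ((v - am) * (ρint - ρm)) ((ap - v) * (ρp - ρint)) ≤
        (ap - v) * (ρp - ρint) := min_le_right _ _
    have hmin0 : 0 < min ((v - am) * (ρint - ρm)) ((ap - v) * (ρp - ρint)) := lt_min ha hb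
    rw [min_eq_left hρm.le, max_eq_right hρm.le, min_eq_left hρp.le, max_eq_right hρp.le]
    refine ⟨⟨?_, ?_⟩, ?_, ?_⟩ <;> nlinarith
  · obtain ⟨ha, hb⟩ := h2
    have hρm : ρint < ρm := by nlinarith
    have hρp : ρp < ρint := by nlinarith
    have hmax1 : (v - am) * (ρint - ρm) ≤
        max ((v - am) * (ρint - ρm)) ((ap - v) * (ρp - ρint)) := le_max_left _ _
    have hmax2 : (ap - v) * (ρp - ρint) ≤
        max ((v - am) * (ρint - ρm)) ((ap - v) * (ρp - ρint)) := le_max_right _ _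
    have hmax0 : max ((v - am) * (ρint - ρm)) ((ap - v) * (ρp - ρint)) < 0 := max_lt ha hb
    rw [min_eq_right hρm.le, max_eq_left hρm.le, min_eq_right hρp.le, max_eq_left hρp.le]
    refine ⟨⟨?_, ?_⟩, ?_, ?_⟩ <;> nlinarith
  · simp only [zero_div, add_zero]
    exact ⟨⟨min_le_right _ _, le_max_right _ _⟩, min_le_left _ _, le_max_left _ _⟩
end

section
/- Semi-discrete preservation of the discrete divergence by constrained transport: let Δx > 0 and Δy > 0, let Ω : ℤ × ℤ → (ℝ → ℝ) be arbitrary corner electric fields, and let B₁ : ℤ × ℤ → (ℝ → ℝ) (face values at (j+½, k)) and B₂ : ℤ × ℤ → (ℝ → ℝ) (face values at (j, k+½)) be differentiable functions of time satisfying, for all j, k and t, d/dt B₁_{j+½,k}(t) = −(Ω_{j+½,k+½}(t) − Ω_{j+½,k−½}(t))/Δy and d/dt B₂_{j,k+½}(t) = (Ω_{j+½,k+½}(t) − Ω_{j−½,k+½}(t))/Δx. Then for every cell (j,k), the discrete divergence (∇·B)_{j,k}(t) = (B₁_{j+½,k}(t) − B₁_{j−½,k}(t))/Δx + (B₂_{j,k+½}(t)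 − B₂_{j,k−½}(t))/Δy is constant in time. -/
/-- Semi-discrete preservation of the discrete divergence by constrained
transport.  The face value `B1 (j, k)` stands for `B₁` at `(j+½, k)`,
`B2 (j, k)` stands for `B₂` at `(j, k+½)`, and `Ω (j, k)` stands for the
corner electric field at `(j+½, k+½)`. -/
theorem constrained_transport_semidiscrete_divergence_constant
    (Δx Δy : ℝ) (hΔx : 0 < Δx) (hΔy : 0 < Δy)
    (Ω B1 B2 : ℤ × ℤ → ℝ → ℝ)
    (hB1 : ∀ (j k : ℤ) (t : ℝ), HasDerivAt (B1 (j, k))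
      (-(Ω (j, k) t - Ω (j, k - 1) t) / Δy) t)
    (hB2 : ∀ (j k : ℤ) (t : ℝ), HasDerivAt (B2 (j, k))
      ((Ω (j, k) t - Ω (j - 1, k) t) / Δx) t)
    (divB : ℤ × ℤ → ℝ → ℝ)
    (hdiv : ∀ (j k : ℤ) (t : ℝ), divB (j, k) t =
      (B1 (j, k) t - B1 (j - 1, k) t) / Δx
        + (B2 (j, k) t - B2 (j, k - 1) t) / Δy) :
    ∀ (j k : ℤ) (t₁ t₂ : ℝ), divB (j, k) t₁ = divB (j, k) t₂ := by
  intro j k t₁ t₂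
  rw [hdiv, hdiv]
  have key : ∀ t : ℝ, HasDerivAt
      (fun t => (B1 (j, k) t - B1 (j - 1, k) t) / Δx
        + (B2 (j, k) t - B2 (j, k - 1) t) / Δy) 0 t := by
    intro t
    have h := (((hB1 j k t).sub (hB1 (j - 1) k t)).div_const Δx).add
      (((hB2 j k t).sub (hB2 j (k - 1) t)).div_const Δy)
    refine h.congr_deriv ?_
    ring
  have := fun t : ℝ => (key t).deriv
  have hc : ∀ t : ℝ, (fun t => (B1 (j, k) t - B1 (j - 1, k) t) / Δx
      + (B2 (j, k) t - B2 (j, k - 1) t) / Δy) t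
      = (fun t => (B1 (j, k) t - B1 (j - 1, k) t) / Δx
      + (B2 (j, k) t - B2 (j, k - 1) t) / Δy) 0 := by
    intro t
    apply is_const_of_deriv_eq_zero (fun t => ((key t).differentiableAt)) this
  exact (hc t₁).trans (hc t₂).symm
end

section
/- Preservation of the discrete divergence by the three-stage Runge–Kutta constrained-transport update: let Δx, Δy, Δt > 0, let Ω⁰, Ω¹, Ω² : ℤ × ℤ → ℝ be arbitrary corner electric fields, and define the curl-type increments C¹(Ω)_{j+½,k} = −(Ω_{j+½,k+½} − Ω_{j+½,k−½})/Δy and C²(Ω)_{j,k+½} = (Ω_{j+½,k+½} − Ω_{j−½,k+½})/Δx. Given face fields B₁ⁿ, B₂ⁿ, define the stages B^{(1)} = Bⁿ + Δt·C(Ω⁰), B^{(2)} = B^{(1)} + (Δt/4)(−3C(Ω⁰) + C(Ω¹)), and B^{n+1} = B^{(2)} + (Δt/12)(−C(Ω⁰) − C(Ω¹) + 8C(Ω²)), applied componentwise to (B₁, B₂). Then for every cell (j,k), the discrete divergence (∇·B^{n+1})_{j,k} = (B₁^{n+1}{}_{j+½,k} − B₁^{n+1}{}_{j−½,k})/Δx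 + (B₂^{n+1}{}_{j,k+½} − B₂^{n+1}{}_{j,k−½})/Δy equals (∇·Bⁿ)_{j,k}; in particular, if the initial discrete divergence vanishes it vanishes for all stages. -/
/-- Discrete divergence at cell `(j,k)` of face fields `B1` (at `(j+½,k)`)
and `B2` (at `(j,k+½)`). -/
noncomputable def discreteDiv (Δx Δy : ℝ) (B1 B2 : ℤ × ℤ → ℝ) (j k : ℤ) : ℝ :=
  (B1 (j, k) - B1 (j - 1, k)) / Δx + (B2 (j, k) - B2 (j, k - 1)) / Δy

/-- Preservation of the discrete divergence by the three-stage Runge–Kutta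
constrained-transport update. -/
theorem constrained_transport_rk3_divergence_preserved
    (Δx Δy Δt : ℝ) (hΔx : 0 < Δx) (hΔy : 0 < Δy) (hΔt : 0 < Δt)
    (Ω0 Ω1 Ω2 : ℤ × ℤ → ℝ)
    (C1 C2 : (ℤ × ℤ → ℝ) → ℤ × ℤ → ℝ)
    (hC1 : ∀ (Ω : ℤ × ℤ → ℝ) (j k : ℤ),
      C1 Ω (j, k) = -(Ω (j, k) - Ω (j, k - 1)) / Δy)
    (hC2 : ∀ (Ω : ℤ × ℤ → ℝ) (j k : ℤ),
      C2 Ω (j, k) = (Ω (j, k) - Ω (j - 1, k)) / Δx)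
    (B1n B2n B1a B2a B1b B2b B1c B2c : ℤ × ℤ → ℝ)
    (hB1a : ∀ p, B1a p = B1n p + Δt * C1 Ω0 p)
    (hB2a : ∀ p, B2a p = B2n p + Δt * C2 Ω0 p)
    (hB1b : ∀ p, B1b p = B1a p + Δt / 4 * (-3 * C1 Ω0 p + C1 Ω1 p))
    (hB2b : ∀ p, B2b p = B2a p + Δt / 4 * (-3 * C2 Ω0 p + C2 Ω1 p))
    (hB1c : ∀ p, B1c p = B1b p + Δt / 12 * (-C1 Ω0 p - C1 Ω1 p + 8 * C1 Ω2 p))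
    (hB2c : ∀ p, B2c p = B2b p + Δt / 12 * (-C2 Ω0 p - C2 Ω1 p + 8 * C2 Ω2 p)) :
    ∀ j k : ℤ,
      discreteDiv Δx Δy B1c B2c j k = discreteDiv Δx Δy B1n B2n j k ∧
      (discreteDiv Δx Δy B1n B2n j k = 0 →
        discreteDiv Δx Δy B1a B2a j k = 0 ∧
        discreteDiv Δx Δy B1b B2b j k = 0 ∧
        discreteDiv Δx Δy B1c B2c j k = 0) := by
  intro j k
  have hdiv : ∀ Ω : ℤ × ℤ → ℝ,
      (C1 Ω (j, k) - C1 Ω (j - 1, k)) / Δx + (C2 Ω (j, k) - C2 Ω (j, k - 1)) / Δy = 0 := by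
    intro Ω
    rw [hC1, hC1, hC2, hC2]
    field_simp
    ring
  have h0 := hdiv Ω0
  have h1 := hdiv Ω1
  have h2 := hdiv Ω2
  have ea : discreteDiv Δx Δy B1a B2a j k = discreteDiv Δx Δy B1n B2n j k := by
    simp only [discreteDiv, hB1a, hB2a]
    linear_combination Δt * h0
  have eb : discreteDiv Δx Δy B1b B2b j k = discreteDiv Δx Δy B1n B2n j k := by
    simp only [discreteDiv, hB1b, hB2b, hB1a, hB2a]
    linear_combination (Δt / 4) * h0 + (Δt / 4) * h1
  have ec : discreteDiv Δx Δy B1c B2c j k = discreteDiv Δx Δy B1n B2n j k := by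
    simp only [discreteDiv, hB1c, hB2c, hB1b, hB2b, hB1a, hB2a]
    linear_combination (Δt / 6) * h0 + (Δt / 6) * h1 + (2 * Δt / 3) * h2
  exact ⟨ec, fun h => ⟨ea.trans h, eb.trans h, ec.trans h⟩⟩
end
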